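/- Let A = M − N be a splitting of A ∈ ℝ^{n×n} where M is invertible, let b ∈ ℝⁿ, θ ∈ [0,1), and let Ω ∈ ℝ^{n×n} be such that Ω + M is invertible. Suppose x* satisfies the absolute value equation Ax* − |x*| − b = 0 and ‖M^{-1}‖ < 1/[θ(‖Ω+M‖ + ‖Ω+N‖ + 1) + ‖Ω+N‖ + ‖Ω‖ + 1]. Then any sequence {x^k} in ℝⁿ satisfying ‖(Ω+M)x^{k+1} − [(Ω+N)x^k + |x^k| + b]‖ ≤ θ‖Ax^k − |x^k| − b‖ for all k ≥ 0 converges linearly to x* from any starting point x^0. -/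

import Mathlib

open Matrix Filter

/-- Componentwise absolute value of a vector in Euclidean space. -/
noncomputable def vabs {n : ℕ} (x : EuclideanSpace ℝ (Fin n)) : EuclideanSpace ℝ (Fin n) :=
  WithLp.toLp 2 (fun i => |x i|)

/-- A matrix acting on Euclidean space (so that vector norms are the Euclidean 2-norm). -/
noncomputable def mulV {n : ℕ} (M : Matrix (Fin n) (Fin n) ℝ) (x : EuclideanSpace ℝ (Fin n)) :
    EuclideanSpace ℝ (Fin n) :=
  Matrix.toEuclideanCLM (𝕜 := ℝ) M x

/-- Spectral norm of a real matrix: the operator norm induced by the Euclidean vector norm. -/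
noncomputable def spec {n : ℕ} (M : Matrix (Fin n) (Fin n) ℝ) : ℝ :=
  ‖Matrix.toEuclideanCLM (𝕜 := ℝ) M‖

/-- The GAVE residual function `F(x) = A x − B |x| − b`. -/
noncomputable def gaveF {n : ℕ} (A B : Matrix (Fin n) (Fin n) ℝ)
    (b : EuclideanSpace ℝ (Fin n)) (x : EuclideanSpace ℝ (Fin n)) : EuclideanSpace ℝ (Fin n) :=
  mulV A x - mulV B (vabs x) - b

/-- The AVE residual function `A x − |x| − b` (the GAVE with `B = I`). -/
noncomputable def aveF {n : ℕ} (A : Matrix (Fin n) (Fin n) ℝ)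
    (b : EuclideanSpace ℝ (Fin n)) (x : EuclideanSpace ℝ (Fin n)) : EuclideanSpace ℝ (Fin n) :=
  mulV A x - vabs x - b

/-- A sequence converges linearly to `xs`: the distances to `xs` contract by a fixed
factor `c < 1` at every step, and the sequence tends to `xs`. -/
def ConvergesLinearlyTo {n : ℕ} (x : ℕ → EuclideanSpace ℝ (Fin n))
    (xs : EuclideanSpace ℝ (Fin n)) : Prop :=
  (∃ c : ℝ, 0 ≤ c ∧ c < 1 ∧ ∀ k : ℕ, ‖x (k + 1) - xs‖ ≤ c * ‖x k - xs‖) ∧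
    Tendsto x atTop (nhds xs)

lemma mulV_add {n : ℕ} (P Q : Matrix (Fin n) (Fin n) ℝ) (x : EuclideanSpace ℝ (Fin n)) :
    mulV (P + Q) x = mulV P x + mulV Q x := by
  simp [mulV, map_add]

lemma mulV_matsub {n : ℕ} (P Q : Matrix (Fin n) (Fin n) ℝ) (x : EuclideanSpace ℝ (Fin n)) :
    mulV (P - Q) x = mulV P x - mulV Q x := by
  simp [mulV, map_sub]

lemma mulV_sub_vec {n : ℕ} (P : Matrix (Fin n) (Fin n) ℝ) (x y : EuclideanSpace ℝ (Fin n)) :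
    mulV P (x - y) = mulV P x - mulV P y := by
  simp [mulV, map_sub]

lemma norm_mulV_le {n : ℕ} (P : Matrix (Fin n) (Fin n) ℝ) (x : EuclideanSpace ℝ (Fin n)) :
    ‖mulV P x‖ ≤ spec P * ‖x‖ := ContinuousLinearMap.le_opNorm _ _

lemma mulV_inv_mulV {n : ℕ} (M : Matrix (Fin n) (Fin n) ℝ) (hM : IsUnit M)
    (v : EuclideanSpace ℝ (Fin n)) : mulV M⁻¹ (mulV M v) = v := by
  have h1 : M⁻¹ * M = 1 := nonsing_inv_mul M ((isUnit_iff_isUnit_det M).1 hM)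
  have h2 : mulV (M⁻¹ * M) v = mulV M⁻¹ (mulV M v) := by
    simp [mulV, _root_.map_mul]
  rw [← h2, h1]
  simp [mulV, _root_.map_one]

lemma vabs_lip {n : ℕ} (x y : EuclideanSpace ℝ (Fin n)) : ‖vabs x - vabs y‖ ≤ ‖x - y‖ := by
  rw [EuclideanSpace.norm_eq, EuclideanSpace.norm_eq]
  apply Real.sqrt_le_sqrt
  apply Finset.sum_le_sum
  intro i _
  have h1 : (vabs x - vabs y) i = |x i| - |y i| := rfl
  have h2 : (x - y) i = x i - y i := rfl
  rw [h1, h2, Real.norm_eq_abs, Real.norm_eq_abs]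
  have := abs_abs_sub_abs_le_abs_sub (x i) (y i)
  calc |(|x i| - |y i|)| ^ 2 ≤ |x i - y i| ^ 2 := by
        apply pow_le_pow_left₀ (abs_nonneg _) this
  _ = |x i - y i| ^ 2 := rfl

set_option maxHeartbeats 1000000

theorem stmt10 {n : ℕ} (A M N Ω : Matrix (Fin n) (Fin n) ℝ)
    (b : EuclideanSpace ℝ (Fin n)) (hA : A = M - N) (hM : IsUnit M) (θ : ℝ)
    (hθ0 : 0 ≤ θ) (hθ1 : θ < 1) (hinv : IsUnit (Ω + M))
    (xs : EuclideanSpace ℝ (Fin n)) (hxs : aveF A b xs = 0)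
    (hcond : spec M⁻¹ <
      1 / (θ * (spec (Ω + M) + spec (Ω + N) + 1) + spec (Ω + N) + spec Ω + 1))
    (x : ℕ → EuclideanSpace ℝ (Fin n))
    (hx : ∀ k : ℕ, ‖mulV (Ω + M) (x (k + 1)) - (mulV (Ω + N) (x k) + vabs (x k) + b)‖ ≤
      θ * ‖aveF A b (x k)‖) :
    ConvergesLinearlyTo x xs := by
  set m := spec M⁻¹ with hmdef
  set sM := spec (Ω + M) with hsMdef
  set sN := spec (Ω + N) with hsNdef
  set sO := spec Ω with hsOdef
  have hm0 : 0 ≤ m := norm_nonneg _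
  have hsM0 : 0 ≤ sM := norm_nonneg _
  have hsN0 : 0 ≤ sN := norm_nonneg _
  have hsO0 : 0 ≤ sO := norm_nonneg _
  have hmul0 : 0 ≤ θ * (sM + sN + 1) := mul_nonneg hθ0 (by linarith)
  have hDpos : (0:ℝ) < θ * (sM + sN + 1) + sN + sO + 1 := by linarith
  have hmD : m * (θ * (sM + sN + 1) + sN + sO + 1) < 1 := by
    rw [lt_div_iff₀ hDpos] at hcond; exact hcond
  have hden : 0 < 1 - m * sO := by nlinarith [mul_nonneg hm0 hmul0, mul_nonneg hm0 hsN0]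
  set c := m * (θ * (sM + sN + 1) + sN + 1) / (1 - m * sO) with hcdef
  have hc0 : 0 ≤ c := by
    apply div_nonneg _ hden.le
    apply mul_nonneg hm0 (by linarith)
  have hc1 : c < 1 := by
    rw [div_lt_one hden]; nlinarith
  -- the fixed point identity
  have hb : mulV A xs - vabs xs = b := by
    have h0 : mulV A xs - vabs xs - b = 0 := hxs
    have := sub_eq_zero.mp h0
    exact this
  have hAsplit : ∀ v : EuclideanSpace ℝ (Fin n), mulV A v = mulV (Ω + M) v - mulV (Ω + N) v := by
    intro v
    rw [hA, mulV_matsub, mulV_add, mulV_add]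
    abel
  have hfix : mulV (Ω + M) xs = mulV (Ω + N) xs + vabs xs + b := by
    have h1 := hAsplit xs
    rw [← hb]
    rw [h1]
    abel
  -- key contraction
  have key : ∀ k, ‖x (k + 1) - xs‖ ≤ c * ‖x k - xs‖ := by
    intro k
    set ek := x k - xs with hek
    set e1 := x (k + 1) - xs with he1
    -- residual of aveF
    have hFrep : aveF A b (x k) = mulV A ek - (vabs (x k) - vabs xs) := by
      show mulV A (x k) - vabs (x k) - b = _
      rw [hek, mulV_sub_vec, ← hb]
      abel
    have hF : ‖aveF A b (x k)‖ ≤ (sM + sN + 1) * ‖ek‖ := by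
      rw [hFrep, hAsplit ek]
      calc ‖mulV (Ω + M) ek - mulV (Ω + N) ek - (vabs (x k) - vabs xs)‖
          ≤ ‖mulV (Ω + M) ek - mulV (Ω + N) ek‖ + ‖vabs (x k) - vabs xs‖ := norm_sub_le _ _
        _ ≤ (‖mulV (Ω + M) ek‖ + ‖mulV (Ω + N) ek‖) + ‖x k - xs‖ :=
            add_le_add (norm_sub_le _ _) (vabs_lip _ _)
        _ ≤ (sM * ‖ek‖ + sN * ‖ek‖) + ‖ek‖ :=
            add_le_add (add_le_add (norm_mulV_le _ _) (norm_mulV_le _ _)) (by rw [hek])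
        _ = (sM + sN + 1) * ‖ek‖ := by ring
    -- decomposition of (Ω+M) e1
    have h1 : mulV (Ω + M) e1 =
        (mulV (Ω + M) (x (k + 1)) - (mulV (Ω + N) (x k) + vabs (x k) + b)) +
          mulV (Ω + N) ek + (vabs (x k) - vabs xs) := by
      rw [he1, hek, mulV_sub_vec, mulV_sub_vec, hfix]
      abel
    have hbound1 : ‖mulV (Ω + M) e1‖ ≤ (θ * (sM + sN + 1) + sN + 1) * ‖ek‖ := by
      rw [h1]
      calc ‖_ + mulV (Ω + N) ek + (vabs (x k) - vabs xs)‖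
          ≤ ‖mulV (Ω + M) (x (k + 1)) - (mulV (Ω + N) (x k) + vabs (x k) + b)‖ +
              ‖mulV (Ω + N) ek‖ + ‖vabs (x k) - vabs xs‖ :=
            (norm_add_le _ _).trans (add_le_add (norm_add_le _ _) le_rfl)
        _ ≤ θ * ‖aveF A b (x k)‖ + sN * ‖ek‖ + ‖ek‖ := by
            refine add_le_add (add_le_add (hx k) (norm_mulV_le _ _)) ?_
            rw [hek]; exact vabs_lip _ _
        _ ≤ θ * ((sM + sN + 1) * ‖ek‖) + sN * ‖ek‖ + ‖ek‖ := by
            have := mul_le_mul_of_nonneg_left hF hθ0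
            linarith
        _ = (θ * (sM + sN + 1) + sN + 1) * ‖ek‖ := by ring
    have h2 : e1 = mulV M⁻¹ (mulV (Ω + M) e1 - mulV Ω e1) := by
      have h3 : mulV (Ω + M) e1 - mulV Ω e1 = mulV M e1 := by
        rw [mulV_add]; abel
      rw [h3, mulV_inv_mulV M hM]
    have hbound2 : ‖e1‖ ≤ m * ((θ * (sM + sN + 1) + sN + 1) * ‖ek‖ + sO * ‖e1‖) := by
      calc ‖e1‖ = ‖mulV M⁻¹ (mulV (Ω + M) e1 - mulV Ω e1)‖ := by rw [← h2]
        _ ≤ m * ‖mulV (Ω + M) e1 - mulV Ω e1‖ := norm_mulV_le _ _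
        _ ≤ m * ((θ * (sM + sN + 1) + sN + 1) * ‖ek‖ + sO * ‖e1‖) := by
            apply mul_le_mul_of_nonneg_left _ hm0
            exact (norm_sub_le _ _).trans (add_le_add hbound1 (norm_mulV_le _ _))
    rw [hcdef, div_mul_eq_mul_div, le_div_iff₀ hden]
    nlinarith [norm_nonneg e1]
  refine ⟨⟨c, hc0, hc1, key⟩, ?_⟩
  have hiter : ∀ k, ‖x k - xs‖ ≤ c ^ k * ‖x 0 - xs‖ := by
    intro k
    induction k with
    | zero => simp
    | succ k ih =>
      calc ‖x (k + 1) - xs‖ ≤ c * ‖x k - xs‖ := key k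
        _ ≤ c * (c ^ k * ‖x 0 - xs‖) := mul_le_mul_of_nonneg_left ih hc0
        _ = c ^ (k + 1) * ‖x 0 - xs‖ := by ring
  have hzero : Tendsto (fun k => ‖x k - xs‖) atTop (nhds 0) := by
    apply squeeze_zero (fun k => norm_nonneg _) hiter
    have h := tendsto_pow_atTop_nhds_zero_of_lt_one hc0 hc1
    simpa using h.mul_const ‖x 0 - xs‖
  exact tendsto_iff_norm_sub_tendsto_zero.mpr hzero
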